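/- arXiv:2006.15210 — 5 statements merged into one kernel-verified Lean document; each statement's English description precedes it below -/
import Mathlib

section
/- Let a ≤ b be real numbers, c ∈ [a,b], and let f be a real-valued function that is 5 times differentiable at c (e.g., analytic on an open interval containing [a,b]). Let β₁ ≠ 0 and β₂, β₃, β₄, β₅ be real numbers, let A₁,…,A₅ be defined from a, b, c, β₁,…,β₅ by the recursive formulas below, and let y₀, y₁,…,y₅ be the coefficients of 1, ε, …, ε⁵ in Λ(f)(c + β₁ε + β₂ε² + β₃ε³ + β₄ε⁴ + β₅ε⁵). Then (b−a)·y₀ + A₁y₁ + A₂y₂ + A₃y₃ + A₄y₄ + A₅y₅ = ∫ₐᵇ T₅,c(x) dx, where T₅,c is the 5th-order Taylor polynomial of f centered at c. -/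
/-- Multiplication in the 6-dimensional truncated polynomial algebra
`R⁽⁶⁾ = ℝ[ε]/(ε⁶)`, with elements represented by their coefficient tuples
`(u 0) + (u 1)ε + (u 2)ε² + (u 3)ε³ + (u 4)ε⁴ + (u 5)ε⁵`. -/
noncomputable def R6mul (u v : Fin 6 → ℝ) : Fin 6 → ℝ :=
  ![u 0 * v 0,
    u 0 * v 1 + u 1 * v 0,
    u 0 * v 2 + u 1 * v 1 + u 2 * v 0,
    u 0 * v 3 + u 1 * v 2 + u 2 * v 1 + u 3 * v 0,
    u 0 * v 4 + u 1 * v 3 + u 2 * v 2 + u 3 * v 1 + u 4 * v 0,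
    u 0 * v 5 + u 1 * v 4 + u 2 * v 3 + u 3 * v 2 + u 4 * v 1 + u 5 * v 0]

/-- The `R⁽⁶⁾`-extension `Λ(f)` of a real function `f`, evaluated at
`x + a₁ε + a₂ε² + a₃ε³ + a₄ε⁴ + a₅ε⁵` (represented as the tuple `![x,a₁,a₂,a₃,a₄,a₅]`). -/
noncomputable def Lam (f : ℝ → ℝ) (u : Fin 6 → ℝ) : Fin 6 → ℝ :=
  ![f (u 0),
    u 1 * iteratedDeriv 1 f (u 0),
    u 2 * iteratedDeriv 1 f (u 0) + (1/2) * (u 1)^2 * iteratedDeriv 2 f (u 0),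
    u 3 * iteratedDeriv 1 f (u 0) + u 1 * u 2 * iteratedDeriv 2 f (u 0)
      + (1/6) * (u 1)^3 * iteratedDeriv 3 f (u 0),
    u 4 * iteratedDeriv 1 f (u 0)
      + (u 1 * u 3 + (1/2) * (u 2)^2) * iteratedDeriv 2 f (u 0)
      + (1/2) * (u 1)^2 * u 2 * iteratedDeriv 3 f (u 0)
      + (1/24) * (u 1)^4 * iteratedDeriv 4 f (u 0),
    u 5 * iteratedDeriv 1 f (u 0)
      + (u 1 * u 4 + u 2 * u 3) * iteratedDeriv 2 f (u 0)
      + (1/2) * ((u 1)^2 * u 3 + u 1 * (u 2)^2) * iteratedDeriv 3 f (u 0)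
      + (1/6) * (u 1)^3 * u 2 * iteratedDeriv 4 f (u 0)
      + (1/120) * (u 1)^5 * iteratedDeriv 5 f (u 0)]

set_option maxHeartbeats 4000000 in
/-- The 5th-order automatic integration induced by `R⁽⁶⁾` computes the integral of the
5th-order Taylor polynomial: `(b−a)y₀ + Σ Aᵢyᵢ = ∫ₐᵇ T₅,c(x) dx`. -/
theorem automatic_integration_main
    (a b c : ℝ) (hab : a ≤ b) (hc : c ∈ Set.Icc a b)
    (f : ℝ → ℝ) (hf : ContDiffAt ℝ 5 f c)
    (β₁ β₂ β₃ β₄ β₅ : ℝ) (hβ₁ : β₁ ≠ 0)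
    (A₁ A₂ A₃ A₄ A₅ : ℝ)
    (hA5 : A₅ = ((b - c)^6 - (a - c)^6) / (6 * β₁^5))
    (hA4 : A₄ = ((b - c)^5 - (a - c)^5) / (5 * β₁^4) - 4 * β₂ * A₅ / β₁)
    (hA3 : A₃ = ((b - c)^4 - (a - c)^4) / (4 * β₁^3) - 3 * β₂ * A₄ / β₁
      - 3 * (β₃ / β₁ + β₂^2 / β₁^2) * A₅)
    (hA2 : A₂ = ((b - c)^3 - (a - c)^3) / (3 * β₁^2) - 2 * β₂ * A₃ / β₁
      - (2 * β₃ / β₁ + β₂^2 / β₁^2) * A₄ - 2 * (β₄ / β₁ + β₂ * β₃ / β₁^2) * A₅)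
    (hA1 : A₁ = ((b - c)^2 - (a - c)^2) / (2 * β₁) - β₂ * A₂ / β₁ - β₃ * A₃ / β₁
      - β₄ * A₄ / β₁ - β₅ * A₅ / β₁) :
    (b - a) * Lam f ![c, β₁, β₂, β₃, β₄, β₅] 0
      + A₁ * Lam f ![c, β₁, β₂, β₃, β₄, β₅] 1
      + A₂ * Lam f ![c, β₁, β₂, β₃, β₄, β₅] 2
      + A₃ * Lam f ![c, β₁, β₂, β₃, β₄, β₅] 3
      + A₄ * Lam f ![c, β₁, β₂, β₃, β₄, β₅] 4
      + A₅ * Lam f ![c, β₁, β₂, β₃, β₄, β₅] 5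
    = ∫ x in a..b, ∑ i ∈ Finset.range 6,
        iteratedDeriv i f c / (Nat.factorial i : ℝ) * (x - c)^i := by
  have hint : ∀ i : ℕ, (∫ x in a..b, (x - c)^i) = ((b-c)^(i+1) - (a-c)^(i+1))/(i+1) := by
    intro i
    rw [intervalIntegral.integral_comp_sub_right (fun y => y^i) c, integral_pow]
  have hrhs : (∫ x in a..b, ∑ i ∈ Finset.range 6,
        iteratedDeriv i f c / (Nat.factorial i : ℝ) * (x - c)^i)
      = ∑ i ∈ Finset.range 6, iteratedDeriv i f c / (Nat.factorial i : ℝ) *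
        (((b-c)^(i+1) - (a-c)^(i+1))/(i+1)) := by
    rw [intervalIntegral.integral_finset_sum]
    · exact Finset.sum_congr rfl fun i _ => by
        rw [intervalIntegral.integral_const_mul, hint]
    · intro i _
      exact Continuous.intervalIntegrable (by continuity) a b
  rw [hrhs]
  have h0 : Lam f ![c, β₁, β₂, β₃, β₄, β₅] 0 = f c := rfl
  have h1 : Lam f ![c, β₁, β₂, β₃, β₄, β₅] 1 = β₁ * iteratedDeriv 1 f c := rfl
  have h2 : Lam f ![c, β₁, β₂, β₃, β₄, β₅] 2
      = β₂ * iteratedDeriv 1 f c + (1/2) * β₁^2 * iteratedDeriv 2 f c := rfl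
  have h3 : Lam f ![c, β₁, β₂, β₃, β₄, β₅] 3
      = β₃ * iteratedDeriv 1 f c + β₁ * β₂ * iteratedDeriv 2 f c
        + (1/6) * β₁^3 * iteratedDeriv 3 f c := rfl
  have h4 : Lam f ![c, β₁, β₂, β₃, β₄, β₅] 4
      = β₄ * iteratedDeriv 1 f c + (β₁ * β₃ + (1/2) * β₂^2) * iteratedDeriv 2 f c
        + (1/2) * β₁^2 * β₂ * iteratedDeriv 3 f c
        + (1/24) * β₁^4 * iteratedDeriv 4 f c := rfl
  have h5 : Lam f ![c, β₁, β₂, β₃, β₄, β₅] 5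
      = β₅ * iteratedDeriv 1 f c + (β₁ * β₄ + β₂ * β₃) * iteratedDeriv 2 f c
        + (1/2) * (β₁^2 * β₃ + β₁ * β₂^2) * iteratedDeriv 3 f c
        + (1/6) * β₁^3 * β₂ * iteratedDeriv 4 f c
        + (1/120) * β₁^5 * iteratedDeriv 5 f c := rfl
  rw [h0, h1, h2, h3, h4, h5]
  have hiter : iteratedDeriv 0 f c = f c := by simp
  simp only [Finset.sum_range_succ, Finset.sum_range_zero, hiter]
  subst hA1 hA2 hA3 hA4 hA5
  generalize f c = d0
  generalize iteratedDeriv 1 f c = d1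
  generalize iteratedDeriv 2 f c = d2
  generalize iteratedDeriv 3 f c = d3
  generalize iteratedDeriv 4 f c = d4
  generalize iteratedDeriv 5 f c = d5
  norm_num [Nat.factorial]
  field_simp
  ring
end

section
/- Let x ∈ ℝ and let f, g be real-valued functions that are 5 times continuously differentiable on an open set containing x. Then for all real numbers a₁, a₂, a₃, a₄, a₅, with u := x + a₁ε + a₂ε² + a₃ε³ + a₄ε⁴ + a₅ε⁵ ∈ R⁽⁶⁾, the R⁽⁶⁾-extension preserves products: Λ(f·g)(u) = Λ(f)(u) · Λ(g)(u) in R⁽⁶⁾. -/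
open Filter Topology

lemma diffAt_iter5 {f : ℝ → ℝ} {y : ℝ} {k : ℕ} (hf : ContDiffAt ℝ 5 f y) (hk : k < 5) :
    DifferentiableAt ℝ (iteratedDeriv k f) y := by
  obtain ⟨u, hu, hcd⟩ := hf.contDiffOn le_rfl (by simp)
  obtain ⟨v, hvu, hv, hyv⟩ := mem_nhds_iff.mp hu
  have hcdv : ContDiffOn ℝ 5 f v := hcd.mono hvu
  have h1 : DifferentiableWithinAt ℝ (iteratedDerivWithin k f v) v y :=
    (hcdv.differentiableOn_iteratedDerivWithin (by exact_mod_cast hk) hv.uniqueDiffOn) y hyv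
  have h2 : ∀ z ∈ v, iteratedDerivWithin k f v z = iteratedDeriv k f z := by
    intro z hz
    rw [iteratedDerivWithin_eq_iteratedFDerivWithin, iteratedDeriv_eq_iteratedFDeriv,
      iteratedFDerivWithin_of_isOpen k hv hz]
  exact ((h1.congr (fun z hz => (h2 z hz).symm) (h2 y hyv).symm).differentiableAt
    (hv.mem_nhds hyv))

lemma hasDerivAt_iter5 {f : ℝ → ℝ} {y : ℝ} {k : ℕ} (hf : ContDiffAt ℝ 5 f y) (hk : k < 5) :
    HasDerivAt (iteratedDeriv k f) (iteratedDeriv (k + 1) f y) y := by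
  have h := (diffAt_iter5 hf hk).hasDerivAt
  rwa [iteratedDeriv_succ]

lemma Leib1 (f g : ℝ → ℝ) (x : ℝ) (hf : ContDiffAt ℝ 5 f x) (hg : ContDiffAt ℝ 5 g x) :
    ∀ᶠ y in 𝓝 x, iteratedDeriv 1 (fun t => f t * g t) y =
      iteratedDeriv 1 f y * iteratedDeriv 0 g y + iteratedDeriv 0 f y * iteratedDeriv 1 g y := by
  filter_upwards [hf.eventually (by simp), hg.eventually (by simp)] with y hfy hgy
  have hF := (hfy.differentiableAt (by norm_num)).hasDerivAt
  have hG := (hgy.differentiableAt (by norm_num)).hasDerivAt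
  simp only [iteratedDeriv_one, iteratedDeriv_zero]
  exact (hF.mul hG).deriv

lemma Leib2 (f g : ℝ → ℝ) (x : ℝ) (hf : ContDiffAt ℝ 5 f x) (hg : ContDiffAt ℝ 5 g x) :
    ∀ᶠ y in 𝓝 x, iteratedDeriv 2 (fun t => f t * g t) y =
      iteratedDeriv 2 f y * iteratedDeriv 0 g y
      + 2 * (iteratedDeriv 1 f y * iteratedDeriv 1 g y)
      + iteratedDeriv 0 f y * iteratedDeriv 2 g y := by
  filter_upwards [(Leib1 f g x hf hg).eventually_nhds, hf.eventually (by simp),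
    hg.eventually (by simp)] with y hy hfy hgy
  have hF0 := hasDerivAt_iter5 hfy (show 0 < 5 by norm_num)
  have hF1 := hasDerivAt_iter5 hfy (show 1 < 5 by norm_num)
  have hG0 := hasDerivAt_iter5 hgy (show 0 < 5 by norm_num)
  have hG1 := hasDerivAt_iter5 hgy (show 1 < 5 by norm_num)
  have heq : (iteratedDeriv 1 (fun t => f t * g t)) =ᶠ[𝓝 y]
      (fun z => iteratedDeriv 1 f z * iteratedDeriv 0 g z
        + iteratedDeriv 0 f z * iteratedDeriv 1 g z) := hy
  rw [show iteratedDeriv 2 (fun t => f t * g t) = deriv (iteratedDeriv 1 (fun t => f t * g t))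
    from iteratedDeriv_succ, heq.deriv_eq]
  exact ((hF1.mul hG0).add (hF0.mul hG1)).deriv.trans (by ring)

lemma Leib3 (f g : ℝ → ℝ) (x : ℝ) (hf : ContDiffAt ℝ 5 f x) (hg : ContDiffAt ℝ 5 g x) :
    ∀ᶠ y in 𝓝 x, iteratedDeriv 3 (fun t => f t * g t) y =
      iteratedDeriv 3 f y * iteratedDeriv 0 g y
      + 3 * (iteratedDeriv 2 f y * iteratedDeriv 1 g y)
      + 3 * (iteratedDeriv 1 f y * iteratedDeriv 2 g y)
      + iteratedDeriv 0 f y * iteratedDeriv 3 g y := by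
  filter_upwards [(Leib2 f g x hf hg).eventually_nhds, hf.eventually (by simp),
    hg.eventually (by simp)] with y hy hfy hgy
  have hF0 := hasDerivAt_iter5 hfy (show 0 < 5 by norm_num)
  have hF1 := hasDerivAt_iter5 hfy (show 1 < 5 by norm_num)
  have hF2 := hasDerivAt_iter5 hfy (show 2 < 5 by norm_num)
  have hG0 := hasDerivAt_iter5 hgy (show 0 < 5 by norm_num)
  have hG1 := hasDerivAt_iter5 hgy (show 1 < 5 by norm_num)
  have hG2 := hasDerivAt_iter5 hgy (show 2 < 5 by norm_num)
  have heq : (iteratedDeriv 2 (fun t => f t * g t)) =ᶠ[𝓝 y]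
      (fun z => iteratedDeriv 2 f z * iteratedDeriv 0 g z
        + 2 * (iteratedDeriv 1 f z * iteratedDeriv 1 g z)
        + iteratedDeriv 0 f z * iteratedDeriv 2 g z) := hy
  rw [show iteratedDeriv 3 (fun t => f t * g t) = deriv (iteratedDeriv 2 (fun t => f t * g t))
    from iteratedDeriv_succ, heq.deriv_eq]
  exact (((hF2.mul hG0).add ((hF1.mul hG1).const_mul 2)).add (hF0.mul hG2)).deriv.trans (by ring)

lemma Leib4 (f g : ℝ → ℝ) (x : ℝ) (hf : ContDiffAt ℝ 5 f x) (hg : ContDiffAt ℝ 5 g x) :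
    ∀ᶠ y in 𝓝 x, iteratedDeriv 4 (fun t => f t * g t) y =
      iteratedDeriv 4 f y * iteratedDeriv 0 g y
      + 4 * (iteratedDeriv 3 f y * iteratedDeriv 1 g y)
      + 6 * (iteratedDeriv 2 f y * iteratedDeriv 2 g y)
      + 4 * (iteratedDeriv 1 f y * iteratedDeriv 3 g y)
      + iteratedDeriv 0 f y * iteratedDeriv 4 g y := by
  filter_upwards [(Leib3 f g x hf hg).eventually_nhds, hf.eventually (by simp),
    hg.eventually (by simp)] with y hy hfy hgy
  have hF0 := hasDerivAt_iter5 hfy (show 0 < 5 by norm_num)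
  have hF1 := hasDerivAt_iter5 hfy (show 1 < 5 by norm_num)
  have hF2 := hasDerivAt_iter5 hfy (show 2 < 5 by norm_num)
  have hF3 := hasDerivAt_iter5 hfy (show 3 < 5 by norm_num)
  have hG0 := hasDerivAt_iter5 hgy (show 0 < 5 by norm_num)
  have hG1 := hasDerivAt_iter5 hgy (show 1 < 5 by norm_num)
  have hG2 := hasDerivAt_iter5 hgy (show 2 < 5 by norm_num)
  have hG3 := hasDerivAt_iter5 hgy (show 3 < 5 by norm_num)
  have heq : (iteratedDeriv 3 (fun t => f t * g t)) =ᶠ[𝓝 y]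
      (fun z => iteratedDeriv 3 f z * iteratedDeriv 0 g z
        + 3 * (iteratedDeriv 2 f z * iteratedDeriv 1 g z)
        + 3 * (iteratedDeriv 1 f z * iteratedDeriv 2 g z)
        + iteratedDeriv 0 f z * iteratedDeriv 3 g z) := hy
  rw [show iteratedDeriv 4 (fun t => f t * g t) = deriv (iteratedDeriv 3 (fun t => f t * g t))
    from iteratedDeriv_succ, heq.deriv_eq]
  exact ((((hF3.mul hG0).add ((hF2.mul hG1).const_mul 3)).add
    ((hF1.mul hG2).const_mul 3)).add (hF0.mul hG3)).deriv.trans (by ring)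

lemma Leib5 (f g : ℝ → ℝ) (x : ℝ) (hf : ContDiffAt ℝ 5 f x) (hg : ContDiffAt ℝ 5 g x) :
    ∀ᶠ y in 𝓝 x, iteratedDeriv 5 (fun t => f t * g t) y =
      iteratedDeriv 5 f y * iteratedDeriv 0 g y
      + 5 * (iteratedDeriv 4 f y * iteratedDeriv 1 g y)
      + 10 * (iteratedDeriv 3 f y * iteratedDeriv 2 g y)
      + 10 * (iteratedDeriv 2 f y * iteratedDeriv 3 g y)
      + 5 * (iteratedDeriv 1 f y * iteratedDeriv 4 g y)
      + iteratedDeriv 0 f y * iteratedDeriv 5 g y := by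
  filter_upwards [(Leib4 f g x hf hg).eventually_nhds, hf.eventually (by simp),
    hg.eventually (by simp)] with y hy hfy hgy
  have hF0 := hasDerivAt_iter5 hfy (show 0 < 5 by norm_num)
  have hF1 := hasDerivAt_iter5 hfy (show 1 < 5 by norm_num)
  have hF2 := hasDerivAt_iter5 hfy (show 2 < 5 by norm_num)
  have hF3 := hasDerivAt_iter5 hfy (show 3 < 5 by norm_num)
  have hF4 := hasDerivAt_iter5 hfy (show 4 < 5 by norm_num)
  have hG0 := hasDerivAt_iter5 hgy (show 0 < 5 by norm_num)
  have hG1 := hasDerivAt_iter5 hgy (show 1 < 5 by norm_num)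
  have hG2 := hasDerivAt_iter5 hgy (show 2 < 5 by norm_num)
  have hG3 := hasDerivAt_iter5 hgy (show 3 < 5 by norm_num)
  have hG4 := hasDerivAt_iter5 hgy (show 4 < 5 by norm_num)
  have heq : (iteratedDeriv 4 (fun t => f t * g t)) =ᶠ[𝓝 y]
      (fun z => iteratedDeriv 4 f z * iteratedDeriv 0 g z
        + 4 * (iteratedDeriv 3 f z * iteratedDeriv 1 g z)
        + 6 * (iteratedDeriv 2 f z * iteratedDeriv 2 g z)
        + 4 * (iteratedDeriv 1 f z * iteratedDeriv 3 g z)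
        + iteratedDeriv 0 f z * iteratedDeriv 4 g z) := hy
  rw [show iteratedDeriv 5 (fun t => f t * g t) = deriv (iteratedDeriv 4 (fun t => f t * g t))
    from iteratedDeriv_succ, heq.deriv_eq]
  exact (((((hF4.mul hG0).add ((hF3.mul hG1).const_mul 4)).add
    ((hF2.mul hG2).const_mul 6)).add ((hF1.mul hG3).const_mul 4)).add
    (hF0.mul hG4)).deriv.trans (by ring)



lemma cons_val_five' {α : Type*} {m : ℕ} (x : α) (u : Fin (m + 5) → α) :
    Matrix.vecCons x u 5 =
      Matrix.vecHead (Matrix.vecTail (Matrix.vecTail (Matrix.vecTail (Matrix.vecTail u)))) :=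
  rfl

/-- The `R⁽⁶⁾`-extension preserves products: `Λ(f·g)(u) = Λ(f)(u) · Λ(g)(u)`. -/
theorem Lam_mul (x : ℝ) (f g : ℝ → ℝ)
    (hf : ContDiffAt ℝ 5 f x) (hg : ContDiffAt ℝ 5 g x)
    (a₁ a₂ a₃ a₄ a₅ : ℝ) :
    Lam (fun t => f t * g t) ![x, a₁, a₂, a₃, a₄, a₅]
      = R6mul (Lam f ![x, a₁, a₂, a₃, a₄, a₅]) (Lam g ![x, a₁, a₂, a₃, a₄, a₅]) := by
  have h1 := (Leib1 f g x hf hg).self_of_nhds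
  have h2 := (Leib2 f g x hf hg).self_of_nhds
  have h3 := (Leib3 f g x hf hg).self_of_nhds
  have h4 := (Leib4 f g x hf hg).self_of_nhds
  have h5 := (Leib5 f g x hf hg).self_of_nhds
  simp only [iteratedDeriv_zero] at h1 h2 h3 h4 h5
  funext i
  fin_cases i <;>
    simp [Lam, R6mul, h1, h2, h3, h4, h5, cons_val_five'] <;> ring
end

section
/- Let x ∈ ℝ, let f, g be 5 times continuously differentiable on an open set containing x, let a₁,…,a₅ ∈ ℝ and u := x + a₁ε + a₂ε² + a₃ε³ + a₄ε⁴ + a₅ε⁵ ∈ R⁽⁶⁾. Then the coefficient of ε⁵ in the product Λ(f)(u)·Λ(g)(u) equals a₅(fg)'(x) + (a₁a₄ + a₂a₃)(fg)''(x) + (1/2)(a₁²a₃ + a₁a₂²)(fg)⁽³⁾(x) + (1/6)a₁³a₂(fg)⁽⁴⁾(x) + (1/120)a₁⁵(fg)⁽⁵⁾(x), where fg denotes the pointwise product. -/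
lemma iterWithin_eq {f : ℝ → ℝ} {s : Set ℝ} (hs : IsOpen s) (k : ℕ) {y : ℝ}
    (hy : y ∈ s) : iteratedDerivWithin k f s y = iteratedDeriv k f y := by
  rw [iteratedDerivWithin_eq_iteratedFDerivWithin, iteratedDeriv_eq_iteratedFDeriv,
    iteratedFDerivWithin_of_isOpen k hs hy]

lemma diffAt_iter {f : ℝ → ℝ} {s : Set ℝ} (hs : IsOpen s) (hf : ContDiffOn ℝ 5 f s)
    {k : ℕ} (hk : k ≤ 4) {y : ℝ} (hy : y ∈ s) :
    DifferentiableAt ℝ (iteratedDeriv k f) y := by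
  have hk5 : (k : WithTop ℕ∞) < 5 := by
    have : (k:ℕ) < 5 := by omega
    exact_mod_cast this
  have h1 : DifferentiableWithinAt ℝ (iteratedDerivWithin k f s) s y :=
    hf.differentiableOn_iteratedDerivWithin hk5 hs.uniqueDiffOn y hy
  have h2 : DifferentiableAt ℝ (iteratedDerivWithin k f s) y :=
    h1.differentiableAt (hs.mem_nhds hy)
  apply h2.congr_of_eventuallyEq
  filter_upwards [hs.mem_nhds hy] with z hz
  exact (iterWithin_eq hs k hz).symm

lemma hasDeriv_iter {f : ℝ → ℝ} {s : Set ℝ} (hs : IsOpen s) (hf : ContDiffOn ℝ 5 f s)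
    {k : ℕ} (hk : k ≤ 4) {y : ℝ} (hy : y ∈ s) :
    HasDerivAt (iteratedDeriv k f) (iteratedDeriv (k+1) f y) y := by
  simpa [← iteratedDeriv_succ] using (diffAt_iter hs hf hk hy).hasDerivAt

lemma vec6_five (a b c d e f : ℝ) : (![a,b,c,d,e,f]) 5 = f := rfl

/-- Leibniz rule up to order 5 on an open set. -/
lemma leibniz5 {f g : ℝ → ℝ} {s : Set ℝ} (hs : IsOpen s)
    (hfs : ContDiffOn ℝ 5 f s) (hgs : ContDiffOn ℝ 5 g s) {x : ℝ} (hx : x ∈ s) :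
    (∀ y ∈ s, iteratedDeriv 1 (fun t => f t * g t) y
        = iteratedDeriv 1 f y * iteratedDeriv 0 g y
          + iteratedDeriv 0 f y * iteratedDeriv 1 g y) ∧
    (∀ y ∈ s, iteratedDeriv 2 (fun t => f t * g t) y
        = iteratedDeriv 2 f y * iteratedDeriv 0 g y
          + 2 * (iteratedDeriv 1 f y * iteratedDeriv 1 g y)
          + iteratedDeriv 0 f y * iteratedDeriv 2 g y) ∧
    (∀ y ∈ s, iteratedDeriv 3 (fun t => f t * g t) y
        = iteratedDeriv 3 f y * iteratedDeriv 0 g y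
          + 3 * (iteratedDeriv 2 f y * iteratedDeriv 1 g y)
          + 3 * (iteratedDeriv 1 f y * iteratedDeriv 2 g y)
          + iteratedDeriv 0 f y * iteratedDeriv 3 g y) ∧
    (∀ y ∈ s, iteratedDeriv 4 (fun t => f t * g t) y
        = iteratedDeriv 4 f y * iteratedDeriv 0 g y
          + 4 * (iteratedDeriv 3 f y * iteratedDeriv 1 g y)
          + 6 * (iteratedDeriv 2 f y * iteratedDeriv 2 g y)
          + 4 * (iteratedDeriv 1 f y * iteratedDeriv 3 g y)
          + iteratedDeriv 0 f y * iteratedDeriv 4 g y) ∧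
    (iteratedDeriv 5 (fun t => f t * g t) x
        = iteratedDeriv 5 f x * iteratedDeriv 0 g x
          + 5 * (iteratedDeriv 4 f x * iteratedDeriv 1 g x)
          + 10 * (iteratedDeriv 3 f x * iteratedDeriv 2 g x)
          + 10 * (iteratedDeriv 2 f x * iteratedDeriv 3 g x)
          + 5 * (iteratedDeriv 1 f x * iteratedDeriv 4 g x)
          + iteratedDeriv 0 f x * iteratedDeriv 5 g x) := by
  have Hf : ∀ k, k ≤ 4 → ∀ y ∈ s,
      HasDerivAt (iteratedDeriv k f) (iteratedDeriv (k+1) f y) y :=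
    fun k hk y hy => hasDeriv_iter hs hfs hk hy
  have Hg : ∀ k, k ≤ 4 → ∀ y ∈ s,
      HasDerivAt (iteratedDeriv k g) (iteratedDeriv (k+1) g y) y :=
    fun k hk y hy => hasDeriv_iter hs hgs hk hy
  have h1 : ∀ y ∈ s, iteratedDeriv 1 (fun t => f t * g t) y
      = iteratedDeriv 1 f y * iteratedDeriv 0 g y
        + iteratedDeriv 0 f y * iteratedDeriv 1 g y := by
    intro y hy
    have key := ((Hf 0 (by norm_num) y hy).mul (Hg 0 (by norm_num) y hy))
    simp only [iteratedDeriv_zero] at key ⊢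
    rw [iteratedDeriv_one]
    exact key.deriv
  have h2 : ∀ y ∈ s, iteratedDeriv 2 (fun t => f t * g t) y
      = iteratedDeriv 2 f y * iteratedDeriv 0 g y
        + 2 * (iteratedDeriv 1 f y * iteratedDeriv 1 g y)
        + iteratedDeriv 0 f y * iteratedDeriv 2 g y := by
    intro y hy
    have heq : iteratedDeriv 1 (fun t => f t * g t) =ᶠ[nhds y]
        fun z => iteratedDeriv 1 f z * iteratedDeriv 0 g z
          + iteratedDeriv 0 f z * iteratedDeriv 1 g z := by
      filter_upwards [hs.mem_nhds hy] with z hz using h1 z hz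
    have key := (((Hf 1 (by norm_num) y hy).mul (Hg 0 (by norm_num) y hy)).add
      ((Hf 0 (by norm_num) y hy).mul (Hg 1 (by norm_num) y hy)))
    rw [iteratedDeriv_succ, heq.deriv_eq]
    erw [key.deriv]
    norm_num
    ring
  have h3 : ∀ y ∈ s, iteratedDeriv 3 (fun t => f t * g t) y
      = iteratedDeriv 3 f y * iteratedDeriv 0 g y
        + 3 * (iteratedDeriv 2 f y * iteratedDeriv 1 g y)
        + 3 * (iteratedDeriv 1 f y * iteratedDeriv 2 g y)
        + iteratedDeriv 0 f y * iteratedDeriv 3 g y := by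
    intro y hy
    have heq : iteratedDeriv 2 (fun t => f t * g t) =ᶠ[nhds y]
        fun z => iteratedDeriv 2 f z * iteratedDeriv 0 g z
          + 2 * (iteratedDeriv 1 f z * iteratedDeriv 1 g z)
          + iteratedDeriv 0 f z * iteratedDeriv 2 g z := by
      filter_upwards [hs.mem_nhds hy] with z hz using h2 z hz
    have key := ((((Hf 2 (by norm_num) y hy).mul (Hg 0 (by norm_num) y hy)).add
      (((Hf 1 (by norm_num) y hy).mul (Hg 1 (by norm_num) y hy)).const_mul 2)).add
      ((Hf 0 (by norm_num) y hy).mul (Hg 2 (by norm_num) y hy)))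
    rw [iteratedDeriv_succ, heq.deriv_eq]
    erw [key.deriv]
    norm_num
    ring
  have h4 : ∀ y ∈ s, iteratedDeriv 4 (fun t => f t * g t) y
      = iteratedDeriv 4 f y * iteratedDeriv 0 g y
        + 4 * (iteratedDeriv 3 f y * iteratedDeriv 1 g y)
        + 6 * (iteratedDeriv 2 f y * iteratedDeriv 2 g y)
        + 4 * (iteratedDeriv 1 f y * iteratedDeriv 3 g y)
        + iteratedDeriv 0 f y * iteratedDeriv 4 g y := by
    intro y hy
    have heq : iteratedDeriv 3 (fun t => f t * g t) =ᶠ[nhds y]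
        fun z => iteratedDeriv 3 f z * iteratedDeriv 0 g z
          + 3 * (iteratedDeriv 2 f z * iteratedDeriv 1 g z)
          + 3 * (iteratedDeriv 1 f z * iteratedDeriv 2 g z)
          + iteratedDeriv 0 f z * iteratedDeriv 3 g z := by
      filter_upwards [hs.mem_nhds hy] with z hz using h3 z hz
    have key := (((((Hf 3 (by norm_num) y hy).mul (Hg 0 (by norm_num) y hy)).add
      (((Hf 2 (by norm_num) y hy).mul (Hg 1 (by norm_num) y hy)).const_mul 3)).add
      (((Hf 1 (by norm_num) y hy).mul (Hg 2 (by norm_num) y hy)).const_mul 3)).add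
      ((Hf 0 (by norm_num) y hy).mul (Hg 3 (by norm_num) y hy)))
    rw [iteratedDeriv_succ, heq.deriv_eq]
    erw [key.deriv]
    norm_num
    ring
  have h5 : iteratedDeriv 5 (fun t => f t * g t) x
      = iteratedDeriv 5 f x * iteratedDeriv 0 g x
        + 5 * (iteratedDeriv 4 f x * iteratedDeriv 1 g x)
        + 10 * (iteratedDeriv 3 f x * iteratedDeriv 2 g x)
        + 10 * (iteratedDeriv 2 f x * iteratedDeriv 3 g x)
        + 5 * (iteratedDeriv 1 f x * iteratedDeriv 4 g x)
        + iteratedDeriv 0 f x * iteratedDeriv 5 g x := by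
    have heq : iteratedDeriv 4 (fun t => f t * g t) =ᶠ[nhds x]
        fun z => iteratedDeriv 4 f z * iteratedDeriv 0 g z
          + 4 * (iteratedDeriv 3 f z * iteratedDeriv 1 g z)
          + 6 * (iteratedDeriv 2 f z * iteratedDeriv 2 g z)
          + 4 * (iteratedDeriv 1 f z * iteratedDeriv 3 g z)
          + iteratedDeriv 0 f z * iteratedDeriv 4 g z := by
      filter_upwards [hs.mem_nhds hx] with z hz using h4 z hz
    have key := ((((((Hf 4 (by norm_num) x hx).mul (Hg 0 (by norm_num) x hx)).add
      (((Hf 3 (by norm_num) x hx).mul (Hg 1 (by norm_num) x hx)).const_mul 4)).add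
      (((Hf 2 (by norm_num) x hx).mul (Hg 2 (by norm_num) x hx)).const_mul 6)).add
      (((Hf 1 (by norm_num) x hx).mul (Hg 3 (by norm_num) x hx)).const_mul 4)).add
      ((Hf 0 (by norm_num) x hx).mul (Hg 4 (by norm_num) x hx)))
    rw [iteratedDeriv_succ, heq.deriv_eq]
    erw [key.deriv]
    norm_num
    ring
  exact ⟨h1, h2, h3, h4, h5⟩


/-- The coefficient of ε⁵ in the product `Λ(f)(u)·Λ(g)(u)`. -/
theorem prod_coeff_five (x : ℝ) (f g : ℝ → ℝ)
    (hf : ContDiffAt ℝ 5 f x) (hg : ContDiffAt ℝ 5 g x)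
    (a₁ a₂ a₃ a₄ a₅ : ℝ) :
    R6mul (Lam f ![x, a₁, a₂, a₃, a₄, a₅]) (Lam g ![x, a₁, a₂, a₃, a₄, a₅]) 5
      = a₅ * iteratedDeriv 1 (fun t => f t * g t) x
        + (a₁ * a₄ + a₂ * a₃) * iteratedDeriv 2 (fun t => f t * g t) x
        + (1/2) * (a₁^2 * a₃ + a₁ * a₂^2) * iteratedDeriv 3 (fun t => f t * g t) x
        + (1/6) * a₁^3 * a₂ * iteratedDeriv 4 (fun t => f t * g t) x
        + (1/120) * a₁^5 * iteratedDeriv 5 (fun t => f t * g t) x := by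
  obtain ⟨u, hu, hfu⟩ := hf.contDiffOn le_rfl (by simp)
  obtain ⟨v, hv, hgv⟩ := hg.contDiffOn le_rfl (by simp)
  set s := interior u ∩ interior v with hsdef
  have hs : IsOpen s := isOpen_interior.inter isOpen_interior
  have hx : x ∈ s := ⟨mem_interior_iff_mem_nhds.2 hu, mem_interior_iff_mem_nhds.2 hv⟩
  have hfs : ContDiffOn ℝ 5 f s := hfu.mono fun y hy => interior_subset hy.1
  have hgs : ContDiffOn ℝ 5 g s := hgv.mono fun y hy => interior_subset hy.2
  obtain ⟨h1, h2, h3, h4, h5⟩ := leibniz5 hs hfs hgs hx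
  simp only [iteratedDeriv_zero] at h1 h2 h3 h4 h5
  rw [h1 x hx, h2 x hx, h3 x hx, h4 x hx, h5]
  simp only [R6mul, Lam, Matrix.cons_val_zero, Matrix.cons_val_one, Matrix.head_cons,
    Matrix.cons_val_two, Matrix.cons_val_three, Matrix.cons_val_four, Matrix.tail_cons,
    vec6_five]
  ring
end

section
/- Let x ∈ ℝ, let g be 5 times continuously differentiable on an open set containing x and f be 5 times continuously differentiable on an open set containing g(x), let a₁,…,a₅ ∈ ℝ and u := x + a₁ε + a₂ε² + a₃ε³ + a₄ε⁴ + a₅ε⁵ ∈ R⁽⁶⁾. Then in Λ(f)(Λ(g)(u)): the coefficient of ε equals a₁(f∘g)'(x); the coefficient of ε² equals a₂(f∘g)'(x) + (1/2)a₁²(f∘g)''(x); and the coefficient of ε³ equals a₃(f∘g)'(x) + a₁a₂(f∘g)''(x) + (1/6)a₁³(f∘g)'''(x). -/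
open Filter Topology

lemma cd_deriv {f : ℝ → ℝ} {x : ℝ} {m n : ℕ} (hf : ContDiffAt ℝ n f x) (h : m + 1 ≤ n) :
    ContDiffAt ℝ m (deriv f) x := by
  have := (hf.fderiv_right (m := m) (by exact_mod_cast h)).clm_apply (contDiffAt_const (c := (1:ℝ)))
  exact this.congr_of_eventuallyEq (Filter.Eventually.of_forall fun y => (fderiv_apply_one_eq_deriv).symm)

lemma d1_ev {g f : ℝ → ℝ} {x : ℝ} (hg : ContDiffAt ℝ 5 g x) (hf : ContDiffAt ℝ 5 f (g x)) :
    deriv (f ∘ g) =ᶠ[𝓝 x] fun y => deriv f (g y) * deriv g y := by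
  have evg : ∀ᶠ y in 𝓝 x, ContDiffAt ℝ 5 g y := hg.eventually (by simp)
  have evf : ∀ᶠ y in 𝓝 x, ContDiffAt ℝ 5 f (g y) :=
    hg.continuousAt.tendsto.eventually (hf.eventually (by simp))
  filter_upwards [evg, evf] with y hgy hfy
  exact deriv_comp y (hfy.differentiableAt (by norm_num)) (hgy.differentiableAt (by norm_num))

lemma d2_ev {g f : ℝ → ℝ} {x : ℝ} (hg : ContDiffAt ℝ 5 g x) (hf : ContDiffAt ℝ 5 f (g x)) :
    deriv (deriv (f ∘ g)) =ᶠ[𝓝 x]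
      fun y => deriv (deriv f) (g y) * (deriv g y)^2 + deriv f (g y) * deriv (deriv g) y := by
  have evg : ∀ᶠ y in 𝓝 x, ContDiffAt ℝ 5 g y := hg.eventually (by simp)
  have evf : ∀ᶠ y in 𝓝 x, ContDiffAt ℝ 5 f (g y) :=
    hg.continuousAt.tendsto.eventually (hf.eventually (by simp))
  filter_upwards [evg, evf] with y hgy hfy
  rw [(d1_ev hgy hfy).deriv_eq]
  have hdg : DifferentiableAt ℝ g y := hgy.differentiableAt (by norm_num)
  have hdf' : DifferentiableAt ℝ (deriv f) (g y) :=
    (cd_deriv hfy (m := 4) (by norm_num)).differentiableAt (by norm_num)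
  have h1 : DifferentiableAt ℝ (fun z => deriv f (g z)) y := hdf'.comp y hdg
  have hdg' : DifferentiableAt ℝ (deriv g) y :=
    (cd_deriv hgy (m := 4) (by norm_num)).differentiableAt (by norm_num)
  have H : HasDerivAt (fun z => deriv f (g z) * deriv g z)
      (deriv (deriv f) (g y) * deriv g y * deriv g y + deriv f (g y) * deriv (deriv g) y) y :=
    (hdf'.hasDerivAt.comp y hdg.hasDerivAt).mul hdg'.hasDerivAt
  rw [H.deriv]; ring

lemma d3_eq {g f : ℝ → ℝ} {x : ℝ} (hg : ContDiffAt ℝ 5 g x) (hf : ContDiffAt ℝ 5 f (g x)) :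
    deriv (deriv (deriv (f ∘ g))) x
      = deriv (deriv (deriv f)) (g x) * (deriv g x)^3
        + 3 * deriv (deriv f) (g x) * deriv g x * deriv (deriv g) x
        + deriv f (g x) * deriv (deriv (deriv g)) x := by
  rw [(d2_ev hg hf).deriv_eq]
  have hdg : DifferentiableAt ℝ g x := hg.differentiableAt (by norm_num)
  have hdg' : DifferentiableAt ℝ (deriv g) x :=
    (cd_deriv hg (m := 4) (by norm_num)).differentiableAt (by norm_num)
  have hdg'' : DifferentiableAt ℝ (deriv (deriv g)) x :=
    (cd_deriv (cd_deriv hg (m := 4) (by norm_num)) (m := 3) (by norm_num)).differentiableAt (by norm_num)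
  have hdf' : DifferentiableAt ℝ (deriv f) (g x) :=
    (cd_deriv hf (m := 4) (by norm_num)).differentiableAt (by norm_num)
  have hdf'' : DifferentiableAt ℝ (deriv (deriv f)) (g x) :=
    (cd_deriv (cd_deriv hf (m := 4) (by norm_num)) (m := 3) (by norm_num)).differentiableAt (by norm_num)
  have c1 : DifferentiableAt ℝ (fun z => deriv (deriv f) (g z)) x := hdf''.comp x hdg
  have c0 : DifferentiableAt ℝ (fun z => deriv f (g z)) x := hdf'.comp x hdg
  have H : HasDerivAt
      (fun y => deriv (deriv f) (g y) * deriv g y ^ 2 + deriv f (g y) * deriv (deriv g) y)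
      (deriv (deriv (deriv f)) (g x) * deriv g x * deriv g x ^ 2
        + deriv (deriv f) (g x) * (2 * deriv g x ^ 1 * deriv (deriv g) x)
        + (deriv (deriv f) (g x) * deriv g x * deriv (deriv g) x
          + deriv f (g x) * deriv (deriv (deriv g)) x)) x := by
    exact ((hdf''.hasDerivAt.comp x hdg.hasDerivAt).mul (hdg'.hasDerivAt.pow 2)).add
      ((hdf'.hasDerivAt.comp x hdg.hasDerivAt).mul hdg''.hasDerivAt)
  rw [H.deriv]; ring

lemma id1_eq {g f : ℝ → ℝ} {x : ℝ} (hg : ContDiffAt ℝ 5 g x) (hf : ContDiffAt ℝ 5 f (g x)) :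
    iteratedDeriv 1 (f ∘ g) x = deriv f (g x) * deriv g x := by
  rw [iteratedDeriv_one]
  exact (d1_ev hg hf).self_of_nhds

lemma id2_eq {g f : ℝ → ℝ} {x : ℝ} (hg : ContDiffAt ℝ 5 g x) (hf : ContDiffAt ℝ 5 f (g x)) :
    iteratedDeriv 2 (f ∘ g) x
      = deriv (deriv f) (g x) * (deriv g x)^2 + deriv f (g x) * deriv (deriv g) x := by
  rw [show (2:ℕ) = 1 + 1 from rfl, iteratedDeriv_succ, iteratedDeriv_one]
  exact (d2_ev hg hf).self_of_nhds

lemma id3_eq {g f : ℝ → ℝ} {x : ℝ} (hg : ContDiffAt ℝ 5 g x) (hf : ContDiffAt ℝ 5 f (g x)) :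
    iteratedDeriv 3 (f ∘ g) x
      = deriv (deriv (deriv f)) (g x) * (deriv g x)^3
        + 3 * deriv (deriv f) (g x) * deriv g x * deriv (deriv g) x
        + deriv f (g x) * deriv (deriv (deriv g)) x := by
  rw [show (3:ℕ) = 1 + 1 + 1 from rfl, iteratedDeriv_succ, iteratedDeriv_succ, iteratedDeriv_one]
  exact d3_eq hg hf


/-- Coefficients of ε, ε², ε³ in `Λ(f)(Λ(g)(u))` are given by the derivatives of
the composition `f ∘ g`. -/
theorem comp_coeff_low (x : ℝ) (g f : ℝ → ℝ)
    (hg : ContDiffAt ℝ 5 g x) (hf : ContDiffAt ℝ 5 f (g x))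
    (a₁ a₂ a₃ a₄ a₅ : ℝ) :
    Lam f (Lam g ![x, a₁, a₂, a₃, a₄, a₅]) 1
        = a₁ * iteratedDeriv 1 (f ∘ g) x ∧
    Lam f (Lam g ![x, a₁, a₂, a₃, a₄, a₅]) 2
        = a₂ * iteratedDeriv 1 (f ∘ g) x + (1/2) * a₁^2 * iteratedDeriv 2 (f ∘ g) x ∧
    Lam f (Lam g ![x, a₁, a₂, a₃, a₄, a₅]) 3
        = a₃ * iteratedDeriv 1 (f ∘ g) x + a₁ * a₂ * iteratedDeriv 2 (f ∘ g) x
          + (1/6) * a₁^3 * iteratedDeriv 3 (f ∘ g) x := by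

  have e1 : ∀ h : ℝ → ℝ, ∀ y : ℝ, iteratedDeriv 1 h y = deriv h y := fun h y => by
    rw [iteratedDeriv_one]
  have e2 : ∀ h : ℝ → ℝ, ∀ y : ℝ, iteratedDeriv 2 h y = deriv (deriv h) y := fun h y => by
    rw [show (2:ℕ) = 1 + 1 from rfl, iteratedDeriv_succ, iteratedDeriv_one]
  have e3 : ∀ h : ℝ → ℝ, ∀ y : ℝ, iteratedDeriv 3 h y = deriv (deriv (deriv h)) y :=
    fun h y => by
    rw [show (3:ℕ) = 1 + 1 + 1 from rfl, iteratedDeriv_succ, iteratedDeriv_succ, iteratedDeriv_one]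
  refine ⟨?_, ?_, ?_⟩ <;>
    simp only [Lam, Matrix.cons_val_zero, Matrix.cons_val_one, Matrix.head_cons,
      Matrix.cons_val_two, Matrix.tail_cons, Matrix.cons_val_three, Matrix.cons_val_four,
      Matrix.cons_val_fin_one, id1_eq hg hf, id2_eq hg hf, id3_eq hg hf, e1, e2, e3] <;>
    ring
end

section
/- Let x ∈ ℝ, let g be 5 times continuously differentiable on an open set containing x and f be 5 times continuously differentiable on an open set containing g(x), let a₁,…,a₅ ∈ ℝ and u := x + a₁ε + a₂ε² + a₃ε³ + a₄ε⁴ + a₅ε⁵ ∈ R⁽⁶⁾. Then the coefficient of ε⁵ in Λ(f)(Λ(g)(u)) equals a₅(f∘g)'(x) + (a₁a₄ + a₂a₃)(f∘g)''(x) + (1/2)(a₁²a₃ + a₁a₂²)(f∘g)⁽³⁾(x) + (1/6)a₁³a₂(f∘g)⁽⁴⁾(x) + (1/120)a₁⁵(f∘g)⁽⁵⁾(x). -/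
open scoped ContDiff Topology


lemma vec6_five_s14 {α : Type*} (b0 b1 b2 b3 b4 b5 : α) :
    ![b0, b1, b2, b3, b4, b5] (5 : Fin 6) = b5 := rfl

lemma diffAt_iteratedDeriv {h : ℝ → ℝ} {y : ℝ} (hh : ContDiffAt ℝ 5 h y) {k : ℕ} (hk : k < 5) :
    DifferentiableAt ℝ (iteratedDeriv k h) y := by
  have h1 : ContDiffAt ℝ 1 (iteratedFDeriv ℝ k h) y :=
    hh.iteratedFDeriv_right (by norm_cast; omega)
  have h2 : ContDiffAt ℝ 1 (iteratedDeriv k h) y := by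
    rw [iteratedDeriv_eq_equiv_comp]
    exact ((ContinuousMultilinearMap.piFieldEquiv ℝ (Fin k) ℝ).symm.contDiff.contDiffAt).comp y h1
  exact h2.differentiableAt one_ne_zero

/-- The coefficient of ε⁵ in `Λ(f)(Λ(g)(u))`. -/
theorem comp_coeff_five (x : ℝ) (g f : ℝ → ℝ)
    (hg : ContDiffAt ℝ 5 g x) (hf : ContDiffAt ℝ 5 f (g x))
    (a₁ a₂ a₃ a₄ a₅ : ℝ) :
    Lam f (Lam g ![x, a₁, a₂, a₃, a₄, a₅]) 5
      = a₅ * iteratedDeriv 1 (f ∘ g) x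
        + (a₁ * a₄ + a₂ * a₃) * iteratedDeriv 2 (f ∘ g) x
        + (1/2) * (a₁^2 * a₃ + a₁ * a₂^2) * iteratedDeriv 3 (f ∘ g) x
        + (1/6) * a₁^3 * a₂ * iteratedDeriv 4 (f ∘ g) x
        + (1/120) * a₁^5 * iteratedDeriv 5 (f ∘ g) x := by
  have h5 : (5 : WithTop ℕ∞) ≠ ∞ := by norm_num
  have hP : ∀ᶠ y in 𝓝 x, ContDiffAt ℝ 5 g y ∧ ContDiffAt ℝ 5 f (g y) :=
    (hg.eventually h5).and (hg.continuousAt.eventually (hf.eventually h5))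
  have HG : ∀ y : ℝ, ContDiffAt ℝ 5 g y → ∀ k : ℕ, k < 5 →
      HasDerivAt (iteratedDeriv k g) (iteratedDeriv (k+1) g y) y := by
    intro y hy k hk
    have := (diffAt_iteratedDeriv hy hk).hasDerivAt
    rwa [← iteratedDeriv_succ] at this
  have HF : ∀ y : ℝ, ContDiffAt ℝ 5 g y → ContDiffAt ℝ 5 f (g y) → ∀ k : ℕ, k < 5 →
      HasDerivAt (fun z => iteratedDeriv k f (g z))
        (iteratedDeriv (k+1) f (g y) * iteratedDeriv 1 g y) y := by
    intro y hy hyf k hk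
    have h1 : HasDerivAt (iteratedDeriv k f) (iteratedDeriv (k+1) f (g y)) (g y) := by
      have := (diffAt_iteratedDeriv hyf hk).hasDerivAt
      rwa [← iteratedDeriv_succ] at this
    have h2 : HasDerivAt g (iteratedDeriv 1 g y) y := by
      have := HG y hy 0 (by norm_num)
      simpa [iteratedDeriv_zero] using this
    simpa [Function.comp_def] using h1.comp y h2
  -- order 1
  have E1 : iteratedDeriv 1 (f ∘ g) =ᶠ[𝓝 x]
      fun y => iteratedDeriv 1 f (g y) * iteratedDeriv 1 g y := by
    rw [iteratedDeriv_one]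
    filter_upwards [hP] with y hy
    have h0 : HasDerivAt (f ∘ g) (iteratedDeriv 1 f (g y) * iteratedDeriv 1 g y) y := by
      have := HF y hy.1 hy.2 0 (by norm_num)
      simpa [iteratedDeriv_zero, Function.comp_def] using this
    exact h0.deriv
  -- order 2
  have D2 : deriv (fun y => iteratedDeriv 1 f (g y) * iteratedDeriv 1 g y) =ᶠ[𝓝 x]
      fun y => iteratedDeriv 2 f (g y) * iteratedDeriv 1 g y ^ 2
        + iteratedDeriv 1 f (g y) * iteratedDeriv 2 g y := by
    filter_upwards [hP] with y hy
    have H := (HF y hy.1 hy.2 1 (by norm_num)).mul (HG y hy.1 1 (by norm_num))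
    refine H.deriv.trans ?_
    norm_num; ring
  have E2 : iteratedDeriv 2 (f ∘ g) =ᶠ[𝓝 x]
      fun y => iteratedDeriv 2 f (g y) * iteratedDeriv 1 g y ^ 2
        + iteratedDeriv 1 f (g y) * iteratedDeriv 2 g y := by
    have h : iteratedDeriv 2 (f ∘ g) = deriv (iteratedDeriv 1 (f ∘ g)) := iteratedDeriv_succ
    rw [h]; exact E1.deriv.trans D2
  -- order 3
  have D3 : deriv (fun y => iteratedDeriv 2 f (g y) * iteratedDeriv 1 g y ^ 2
        + iteratedDeriv 1 f (g y) * iteratedDeriv 2 g y) =ᶠ[𝓝 x]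
      fun y => iteratedDeriv 3 f (g y) * iteratedDeriv 1 g y ^ 3
        + 3 * (iteratedDeriv 2 f (g y) * (iteratedDeriv 1 g y * iteratedDeriv 2 g y))
        + iteratedDeriv 1 f (g y) * iteratedDeriv 3 g y := by
    filter_upwards [hP] with y hy
    have H := ((HF y hy.1 hy.2 2 (by norm_num)).mul ((HG y hy.1 1 (by norm_num)).pow 2)).add
      ((HF y hy.1 hy.2 1 (by norm_num)).mul (HG y hy.1 2 (by norm_num)))
    refine H.deriv.trans ?_
    norm_num; ring
  have E3 : iteratedDeriv 3 (f ∘ g) =ᶠ[𝓝 x]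
      fun y => iteratedDeriv 3 f (g y) * iteratedDeriv 1 g y ^ 3
        + 3 * (iteratedDeriv 2 f (g y) * (iteratedDeriv 1 g y * iteratedDeriv 2 g y))
        + iteratedDeriv 1 f (g y) * iteratedDeriv 3 g y := by
    have h : iteratedDeriv 3 (f ∘ g) = deriv (iteratedDeriv 2 (f ∘ g)) := iteratedDeriv_succ
    rw [h]; exact E2.deriv.trans D3
  -- order 4
  have D4 : deriv (fun y => iteratedDeriv 3 f (g y) * iteratedDeriv 1 g y ^ 3
        + 3 * (iteratedDeriv 2 f (g y) * (iteratedDeriv 1 g y * iteratedDeriv 2 g y))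
        + iteratedDeriv 1 f (g y) * iteratedDeriv 3 g y) =ᶠ[𝓝 x]
      fun y => iteratedDeriv 4 f (g y) * iteratedDeriv 1 g y ^ 4
        + 6 * (iteratedDeriv 3 f (g y) * (iteratedDeriv 1 g y ^ 2 * iteratedDeriv 2 g y))
        + 3 * (iteratedDeriv 2 f (g y) * iteratedDeriv 2 g y ^ 2)
        + 4 * (iteratedDeriv 2 f (g y) * (iteratedDeriv 1 g y * iteratedDeriv 3 g y))
        + iteratedDeriv 1 f (g y) * iteratedDeriv 4 g y := by
    filter_upwards [hP] with y hy
    have t1 := (HF y hy.1 hy.2 3 (by norm_num)).mul ((HG y hy.1 1 (by norm_num)).pow 3)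
    have t2 := HasDerivAt.const_mul (3:ℝ) ((HF y hy.1 hy.2 2 (by norm_num)).mul
      ((HG y hy.1 1 (by norm_num)).mul (HG y hy.1 2 (by norm_num))))
    have t3 := (HF y hy.1 hy.2 1 (by norm_num)).mul (HG y hy.1 3 (by norm_num))
    have H := (t1.add t2).add t3
    refine H.deriv.trans ?_
    norm_num; ring
  have E4 : iteratedDeriv 4 (f ∘ g) =ᶠ[𝓝 x]
      fun y => iteratedDeriv 4 f (g y) * iteratedDeriv 1 g y ^ 4
        + 6 * (iteratedDeriv 3 f (g y) * (iteratedDeriv 1 g y ^ 2 * iteratedDeriv 2 g y))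
        + 3 * (iteratedDeriv 2 f (g y) * iteratedDeriv 2 g y ^ 2)
        + 4 * (iteratedDeriv 2 f (g y) * (iteratedDeriv 1 g y * iteratedDeriv 3 g y))
        + iteratedDeriv 1 f (g y) * iteratedDeriv 4 g y := by
    have h : iteratedDeriv 4 (f ∘ g) = deriv (iteratedDeriv 3 (f ∘ g)) := iteratedDeriv_succ
    rw [h]; exact E3.deriv.trans D4
  -- order 5
  have D5 : deriv (fun y => iteratedDeriv 4 f (g y) * iteratedDeriv 1 g y ^ 4
        + 6 * (iteratedDeriv 3 f (g y) * (iteratedDeriv 1 g y ^ 2 * iteratedDeriv 2 g y))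
        + 3 * (iteratedDeriv 2 f (g y) * iteratedDeriv 2 g y ^ 2)
        + 4 * (iteratedDeriv 2 f (g y) * (iteratedDeriv 1 g y * iteratedDeriv 3 g y))
        + iteratedDeriv 1 f (g y) * iteratedDeriv 4 g y) =ᶠ[𝓝 x]
      fun y => iteratedDeriv 5 f (g y) * iteratedDeriv 1 g y ^ 5
        + 10 * (iteratedDeriv 4 f (g y) * (iteratedDeriv 1 g y ^ 3 * iteratedDeriv 2 g y))
        + 15 * (iteratedDeriv 3 f (g y) * (iteratedDeriv 1 g y * iteratedDeriv 2 g y ^ 2))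
        + 10 * (iteratedDeriv 3 f (g y) * (iteratedDeriv 1 g y ^ 2 * iteratedDeriv 3 g y))
        + 10 * (iteratedDeriv 2 f (g y) * (iteratedDeriv 2 g y * iteratedDeriv 3 g y))
        + 5 * (iteratedDeriv 2 f (g y) * (iteratedDeriv 1 g y * iteratedDeriv 4 g y))
        + iteratedDeriv 1 f (g y) * iteratedDeriv 5 g y := by
    filter_upwards [hP] with y hy
    have t1 := (HF y hy.1 hy.2 4 (by norm_num)).mul ((HG y hy.1 1 (by norm_num)).pow 4)
    have t2 := HasDerivAt.const_mul (6:ℝ) ((HF y hy.1 hy.2 3 (by norm_num)).mul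
      (((HG y hy.1 1 (by norm_num)).pow 2).mul (HG y hy.1 2 (by norm_num))))
    have t3 := HasDerivAt.const_mul (3:ℝ) ((HF y hy.1 hy.2 2 (by norm_num)).mul
      ((HG y hy.1 2 (by norm_num)).pow 2))
    have t4 := HasDerivAt.const_mul (4:ℝ) ((HF y hy.1 hy.2 2 (by norm_num)).mul
      ((HG y hy.1 1 (by norm_num)).mul (HG y hy.1 3 (by norm_num))))
    have t5 := (HF y hy.1 hy.2 1 (by norm_num)).mul (HG y hy.1 4 (by norm_num))
    have H := (((t1.add t2).add t3).add t4).add t5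
    refine H.deriv.trans ?_
    norm_num; ring
  have E5 : iteratedDeriv 5 (f ∘ g) =ᶠ[𝓝 x]
      fun y => iteratedDeriv 5 f (g y) * iteratedDeriv 1 g y ^ 5
        + 10 * (iteratedDeriv 4 f (g y) * (iteratedDeriv 1 g y ^ 3 * iteratedDeriv 2 g y))
        + 15 * (iteratedDeriv 3 f (g y) * (iteratedDeriv 1 g y * iteratedDeriv 2 g y ^ 2))
        + 10 * (iteratedDeriv 3 f (g y) * (iteratedDeriv 1 g y ^ 2 * iteratedDeriv 3 g y))
        + 10 * (iteratedDeriv 2 f (g y) * (iteratedDeriv 2 g y * iteratedDeriv 3 g y))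
        + 5 * (iteratedDeriv 2 f (g y) * (iteratedDeriv 1 g y * iteratedDeriv 4 g y))
        + iteratedDeriv 1 f (g y) * iteratedDeriv 5 g y := by
    have h : iteratedDeriv 5 (f ∘ g) = deriv (iteratedDeriv 4 (f ∘ g)) := iteratedDeriv_succ
    rw [h]; exact E4.deriv.trans D5
  rw [E1.eq_of_nhds, E2.eq_of_nhds, E3.eq_of_nhds, E4.eq_of_nhds, E5.eq_of_nhds]
  simp only [Lam, Matrix.cons_val_zero, Matrix.cons_val_one, Matrix.head_cons,
    Matrix.cons_val_two, Matrix.tail_cons, Matrix.cons_val_three, Matrix.cons_val_four,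
    Matrix.cons_val_fin_one, vec6_five_s14]
  ring
end
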